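/- arXiv:2209.11261 — 2 statements merged into one kernel-verified Lean document; each statement's English description precedes it below -/
import Mathlib

section
/- Let q(x,t) = 2(ρ₁ − ρ₂) / (γ₂^{-1} e^{−2ρ₂x − 4iρ₂²t} − γ₁ e^{−2ρ₁x − 4iρ₁²t}) with ρ₁ > 0 > ρ₂, |γ₁| = |γ₂| = 1, and ρ₁ ≠ −ρ₂. Then the denominator vanishes exactly at the points (x,t) = (0, tₙ), n ∈ ℤ, where tₙ = (arg(γ₁γ₂) + 2πn)/(4(ρ₁² − ρ₂²)). -/
open Real

/-- Denominator of the one-soliton solution of the focusing nonlocal NLS: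
`D(x,t) = γ₂⁻¹ e^{−2ρ₂x−4iρ₂²t} − γ₁ e^{−2ρ₁x−4iρ₁²t}`. -/
noncomputable def solDen (ρ₁ ρ₂ : ℝ) (γ₁ γ₂ : ℂ) (x t : ℝ) : ℂ :=
  γ₂⁻¹ * Complex.exp (-2 * (ρ₂ : ℂ) * (x : ℂ) - 4 * Complex.I * (ρ₂ : ℂ) ^ 2 * (t : ℂ)) -
    γ₁ * Complex.exp (-2 * (ρ₁ : ℂ) * (x : ℂ) - 4 * Complex.I * (ρ₁ : ℂ) ^ 2 * (t : ℂ))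

/-- for the one-soliton denominator with `ρ₁ > 0 > ρ₂`,
`|γ₁| = |γ₂| = 1`, `ρ₁ ≠ −ρ₂`, and `θ` a fixed argument of `γ₁γ₂`, the zeros of
the denominator are exactly the points `(0, tₙ)`, `n ∈ ℤ`, with
`tₙ = (θ + 2πn)/(4(ρ₁² − ρ₂²))`. -/
theorem stmt15 (ρ₁ ρ₂ θ : ℝ) (γ₁ γ₂ : ℂ)
    (h1 : 0 < ρ₁) (h2 : ρ₂ < 0) (hne : ρ₁ ≠ -ρ₂)
    (hg1 : ‖γ₁‖ = 1) (hg2 : ‖γ₂‖ = 1)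
    (hθ : Complex.exp (Complex.I * (θ : ℂ)) = γ₁ * γ₂) :
    ∀ x t : ℝ, solDen ρ₁ ρ₂ γ₁ γ₂ x t = 0 ↔
      (x = 0 ∧ ∃ n : ℤ, t = (θ + 2 * π * n) / (4 * (ρ₁ ^ 2 - ρ₂ ^ 2))) := by
  intro x t
  have hγ₂ : γ₂ ≠ 0 := by intro h; simp [h] at hg2
  have hρ : ρ₁ - ρ₂ ≠ 0 := by intro h; linarith
  have hsq : ρ₁ ^ 2 - ρ₂ ^ 2 ≠ 0 := by
    intro h
    have : (ρ₁ - ρ₂) * (ρ₁ + ρ₂) = 0 := by nlinarith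
    rcases mul_eq_zero.1 this with h' | h'
    · exact hρ h'
    · exact hne (by linarith)
  rw [solDen, sub_eq_zero]
  have step1 : (γ₂⁻¹ * Complex.exp (-2 * (ρ₂ : ℂ) * x - 4 * Complex.I * (ρ₂ : ℂ) ^ 2 * t)
      = γ₁ * Complex.exp (-2 * (ρ₁ : ℂ) * x - 4 * Complex.I * (ρ₁ : ℂ) ^ 2 * t)) ↔
      Complex.exp (-2 * (ρ₂ : ℂ) * x - 4 * Complex.I * (ρ₂ : ℂ) ^ 2 * t)
      = Complex.exp (Complex.I * θ + (-2 * (ρ₁ : ℂ) * x - 4 * Complex.I * (ρ₁ : ℂ) ^ 2 * t)) := by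
    rw [inv_mul_eq_iff_eq_mul₀ hγ₂, Complex.exp_add, hθ]
    constructor <;> intro h <;> linear_combination h
  rw [step1, Complex.exp_eq_exp_iff_exists_int]
  constructor
  · rintro ⟨n, hn⟩
    rw [Complex.ext_iff] at hn
    simp [Complex.ext_iff, Complex.mul_re, Complex.mul_im, ← Complex.ofReal_pow] at hn
    obtain ⟨hre, him⟩ := hn
    have hx : x = 0 := by
      rcases hre with h' | h'
      · exact absurd (by linarith : ρ₁ - ρ₂ = 0) hρ
      · exact h'
    refine ⟨hx, n, ?_⟩
    field_simp
    linarith [him]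
  · rintro ⟨hx, n, ht⟩
    refine ⟨n, ?_⟩
    subst hx
    rw [Complex.ext_iff]
    constructor
    · simp [Complex.mul_re, Complex.mul_im, ← Complex.ofReal_pow]
    · simp [Complex.mul_re, Complex.mul_im, ← Complex.ofReal_pow]
      rw [ht]
      field_simp
      ring
end

section
/- Let q(x,t) = 2(ρ₁ − ρ₂)/(γ₂^{-1} e^{−2ρ₂x−4iρ₂²t} − γ₁ e^{−2ρ₁x−4iρ₁²t}) with ρ₁ > 0 > ρ₂ and |γ₁| = |γ₂| = 1. Then at every point (x,t) where the denominator does not vanish, q satisfies the focusing nonlocal NLS equation i∂ₜq(x,t) + ∂ₓ²q(x,t) + 2q(x,t)²\overline{q(−x,t)} = 0. -/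
set_option maxHeartbeats 1000000 in
lemma hED (r : ℝ) (m : ℂ) (x : ℝ) :
    HasDerivAt (fun y : ℝ => Complex.exp (-2*(r:ℂ)*y - m))
      ((-2*(r:ℂ)) * Complex.exp (-2*(r:ℂ)*x - m)) x := by
  have h0 : HasDerivAt (fun y : ℝ => (y : ℂ)) 1 x := by
    simpa using (hasDerivAt_id x).ofReal_comp
  have := ((h0.const_mul (-2*(r:ℂ))).sub_const m).cexp
  simpa [mul_comm] using this

lemma hET (k c : ℂ) (t : ℝ) :
    HasDerivAt (fun τ : ℝ => Complex.exp (k - c*τ)) (-c * Complex.exp (k - c*t)) t := by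
  have h0 : HasDerivAt (fun τ : ℝ => (τ : ℂ)) 1 t := by
    simpa using (hasDerivAt_id t).ofReal_comp
  have := ((h0.const_mul c).const_sub k).cexp
  simpa [mul_comm] using this

set_option maxHeartbeats 1000000 in
lemma alg (r1 r2 u v : ℂ) (hd : u - v ≠ 0) :
    Complex.I * ((0 * (u - v) -
        2*(r1 - r2) * (-(4*Complex.I*r2^2)*u - -(4*Complex.I*r1^2)*v)) / (u - v)^2) +
    ((0 * ((-2*r2)*u - (-2*r1)*v) - 2*(r1-r2) * ((4*r2^2)*u - (4*r1^2)*v)) * (u-v)^2 -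
      (0*(u-v) - 2*(r1-r2)*((-2*r2)*u - (-2*r1)*v)) *
        (((-2*r2)*u - (-2*r1)*v)*(u-v) + (u-v)*((-2*r2)*u - (-2*r1)*v))) / ((u-v)^2)^2 +
    2 * (2*(r1-r2)/(u-v))^2 * (-(2*(r1-r2)) * u * v / (u - v)) = 0 := by
  field_simp
  ring_nf
  simp only [Complex.I_sq]
  ring

/-- The one-soliton solution
`q(x,t) = 2(ρ₁−ρ₂)/(γ₂⁻¹ e^{−2ρ₂x−4iρ₂²t} − γ₁ e^{−2ρ₁x−4iρ₁²t})`. -/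
noncomputable def solQ (ρ₁ ρ₂ : ℝ) (γ₁ γ₂ : ℂ) (x t : ℝ) : ℂ :=
  2 * ((ρ₁ : ℂ) - (ρ₂ : ℂ)) / solDen ρ₁ ρ₂ γ₁ γ₂ x t

set_option maxHeartbeats 2000000 in
/-- the one-soliton function satisfies the focusing nonlocal NLS
equation `i∂ₜq + ∂ₓ²q + 2q²·conj(q(−x,t)) = 0` at every point where the
denominator does not vanish (at `x` and at the reflected point `−x`). -/
theorem stmt16 (ρ₁ ρ₂ : ℝ) (γ₁ γ₂ : ℂ)
    (h1 : 0 < ρ₁) (h2 : ρ₂ < 0)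
    (hg1 : ‖γ₁‖ = 1) (hg2 : ‖γ₂‖ = 1) :
    ∀ x t : ℝ, solDen ρ₁ ρ₂ γ₁ γ₂ x t ≠ 0 → solDen ρ₁ ρ₂ γ₁ γ₂ (-x) t ≠ 0 →
      Complex.I * deriv (fun τ : ℝ => solQ ρ₁ ρ₂ γ₁ γ₂ x τ) t +
        deriv (deriv (fun y : ℝ => solQ ρ₁ ρ₂ γ₁ γ₂ y t)) x +
        2 * (solQ ρ₁ ρ₂ γ₁ γ₂ x t) ^ 2 * (starRingEnd ℂ) (solQ ρ₁ ρ₂ γ₁ γ₂ (-x) t) = 0 := by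
  intro x t hd1 hd2
  have hγ1 : γ₁ ≠ 0 := by intro h; rw [h] at hg1; simp at hg1
  have hγ2 : γ₂ ≠ 0 := by intro h; rw [h] at hg2; simp at hg2
  have hn1 : Complex.normSq γ₁ = 1 := by rw [← Complex.sq_norm, hg1]; norm_num
  have hn2 : Complex.normSq γ₂ = 1 := by rw [← Complex.sq_norm, hg2]; norm_num
  have hg1' : (starRingEnd ℂ) γ₁ = γ₁⁻¹ := by rw [Complex.inv_def, hn1]; simp
  have hg2' : (starRingEnd ℂ) γ₂ = γ₂⁻¹ := by rw [Complex.inv_def, hn2]; simp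
  have hg2i : (starRingEnd ℂ) γ₂⁻¹ = γ₂ := by rw [map_inv₀, hg2', inv_inv]
  -- abbreviations for the two exponentials at (x,t)
  set e1 : ℂ := Complex.exp (-2 * (ρ₁ : ℂ) * (x : ℂ) - 4 * Complex.I * (ρ₁ : ℂ) ^ 2 * (t : ℂ)) with he1
  set e2 : ℂ := Complex.exp (-2 * (ρ₂ : ℂ) * (x : ℂ) - 4 * Complex.I * (ρ₂ : ℂ) ^ 2 * (t : ℂ)) with he2
  have he1ne : e1 ≠ 0 := Complex.exp_ne_zero _
  have he2ne : e2 ≠ 0 := Complex.exp_ne_zero _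
  -- time derivative of the denominator
  have hDt : HasDerivAt (fun τ : ℝ => solDen ρ₁ ρ₂ γ₁ γ₂ x τ)
      (γ₂⁻¹ * (-(4 * Complex.I * (ρ₂ : ℂ) ^ 2) * e2) -
       γ₁ * (-(4 * Complex.I * (ρ₁ : ℂ) ^ 2) * e1)) t := by
    simp only [solDen, he1, he2]
    exact ((hET _ _ t).const_mul γ₂⁻¹).sub ((hET _ _ t).const_mul γ₁)
  have hQt : HasDerivAt (fun τ : ℝ => solQ ρ₁ ρ₂ γ₁ γ₂ x τ)
      ((0 * solDen ρ₁ ρ₂ γ₁ γ₂ x t - 2 * ((ρ₁ : ℂ) - (ρ₂ : ℂ)) *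
        (γ₂⁻¹ * (-(4 * Complex.I * (ρ₂ : ℂ) ^ 2) * e2) -
         γ₁ * (-(4 * Complex.I * (ρ₁ : ℂ) ^ 2) * e1))) / solDen ρ₁ ρ₂ γ₁ γ₂ x t ^ 2) t := by
    simp only [solQ]
    exact (hasDerivAt_const _ _).div hDt hd1
  -- space derivative of the denominator, at any point
  have hDx : ∀ y : ℝ, HasDerivAt (fun z : ℝ => solDen ρ₁ ρ₂ γ₁ γ₂ z t)
      (γ₂⁻¹ * ((-2*(ρ₂:ℂ)) * Complex.exp (-2 * (ρ₂ : ℂ) * (y : ℂ) - 4 * Complex.I * (ρ₂ : ℂ) ^ 2 * (t : ℂ))) -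
       γ₁ * ((-2*(ρ₁:ℂ)) * Complex.exp (-2 * (ρ₁ : ℂ) * (y : ℂ) - 4 * Complex.I * (ρ₁ : ℂ) ^ 2 * (t : ℂ)))) y := by
    intro y
    simp only [solDen]
    exact ((hED _ _ y).const_mul γ₂⁻¹).sub ((hED _ _ y).const_mul γ₁)
  -- first space derivative of q, on the set where the denominator is nonzero
  set F : ℝ → ℂ := fun y =>
      (0 * solDen ρ₁ ρ₂ γ₁ γ₂ y t - 2 * ((ρ₁ : ℂ) - (ρ₂ : ℂ)) *
        (γ₂⁻¹ * ((-2*(ρ₂:ℂ)) * Complex.exp (-2 * (ρ₂ : ℂ) * (y : ℂ) - 4 * Complex.I * (ρ₂ : ℂ) ^ 2 * (t : ℂ))) -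
         γ₁ * ((-2*(ρ₁:ℂ)) * Complex.exp (-2 * (ρ₁ : ℂ) * (y : ℂ) - 4 * Complex.I * (ρ₁ : ℂ) ^ 2 * (t : ℂ))))) /
        solDen ρ₁ ρ₂ γ₁ γ₂ y t ^ 2 with hF
  have hQx : ∀ y : ℝ, solDen ρ₁ ρ₂ γ₁ γ₂ y t ≠ 0 →
      HasDerivAt (fun z : ℝ => solQ ρ₁ ρ₂ γ₁ γ₂ z t) (F y) y := by
    intro y hy
    simp only [solQ, hF]
    exact (hasDerivAt_const _ _).div (hDx y) hy
  have hcont : ContinuousAt (fun y : ℝ => solDen ρ₁ ρ₂ γ₁ γ₂ y t) x := by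
    apply Continuous.continuousAt
    simp only [solDen]
    fun_prop
  have hne : ∀ᶠ y in nhds x, solDen ρ₁ ρ₂ γ₁ γ₂ y t ≠ 0 := hcont.eventually_ne hd1
  have hev : deriv (fun z : ℝ => solQ ρ₁ ρ₂ γ₁ γ₂ z t) =ᶠ[nhds x] F :=
    hne.mono fun y hy => (hQx y hy).deriv
  -- derivative of F at x
  have hnum : HasDerivAt (fun y : ℝ =>
      0 * solDen ρ₁ ρ₂ γ₁ γ₂ y t - 2 * ((ρ₁ : ℂ) - (ρ₂ : ℂ)) *
        (γ₂⁻¹ * ((-2*(ρ₂:ℂ)) * Complex.exp (-2 * (ρ₂ : ℂ) * (y : ℂ) - 4 * Complex.I * (ρ₂ : ℂ) ^ 2 * (t : ℂ))) -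
         γ₁ * ((-2*(ρ₁:ℂ)) * Complex.exp (-2 * (ρ₁ : ℂ) * (y : ℂ) - 4 * Complex.I * (ρ₁ : ℂ) ^ 2 * (t : ℂ)))))
      (0 * (γ₂⁻¹ * ((-2*(ρ₂:ℂ)) * e2) - γ₁ * ((-2*(ρ₁:ℂ)) * e1)) -
       2 * ((ρ₁ : ℂ) - (ρ₂ : ℂ)) *
        (γ₂⁻¹ * ((-2*(ρ₂:ℂ)) * ((-2*(ρ₂:ℂ)) * e2)) - γ₁ * ((-2*(ρ₁:ℂ)) * ((-2*(ρ₁:ℂ)) * e1)))) x := by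
    exact ((hDx x).const_mul 0).sub
      (((((hED ρ₂ _ x).const_mul (-2*(ρ₂:ℂ))).const_mul γ₂⁻¹).sub
        (((hED ρ₁ _ x).const_mul (-2*(ρ₁:ℂ))).const_mul γ₁)).const_mul
        (2 * ((ρ₁ : ℂ) - (ρ₂ : ℂ))))
  have hden2' : HasDerivAt (fun y : ℝ => solDen ρ₁ ρ₂ γ₁ γ₂ y t ^ 2)
      ((γ₂⁻¹ * ((-2*(ρ₂:ℂ)) * e2) - γ₁ * ((-2*(ρ₁:ℂ)) * e1)) * solDen ρ₁ ρ₂ γ₁ γ₂ x t +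
        solDen ρ₁ ρ₂ γ₁ γ₂ x t * (γ₂⁻¹ * ((-2*(ρ₂:ℂ)) * e2) - γ₁ * ((-2*(ρ₁:ℂ)) * e1))) x := by
    have h := (hDx x).mul (hDx x)
    have hfun : (fun y : ℝ => solDen ρ₁ ρ₂ γ₁ γ₂ y t ^ 2) =
        fun y : ℝ => solDen ρ₁ ρ₂ γ₁ γ₂ y t * solDen ρ₁ ρ₂ γ₁ γ₂ y t :=
      funext fun y => sq (solDen ρ₁ ρ₂ γ₁ γ₂ y t)
    rw [hfun, he1, he2]
    exact h
  have hFx : HasDerivAt F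
      (((0 * (γ₂⁻¹ * ((-2*(ρ₂:ℂ)) * e2) - γ₁ * ((-2*(ρ₁:ℂ)) * e1)) -
       2 * ((ρ₁ : ℂ) - (ρ₂ : ℂ)) *
        (γ₂⁻¹ * ((-2*(ρ₂:ℂ)) * ((-2*(ρ₂:ℂ)) * e2)) - γ₁ * ((-2*(ρ₁:ℂ)) * ((-2*(ρ₁:ℂ)) * e1)))) *
        solDen ρ₁ ρ₂ γ₁ γ₂ x t ^ 2 -
        (0 * solDen ρ₁ ρ₂ γ₁ γ₂ x t - 2 * ((ρ₁ : ℂ) - (ρ₂ : ℂ)) *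
          (γ₂⁻¹ * ((-2*(ρ₂:ℂ)) * e2) - γ₁ * ((-2*(ρ₁:ℂ)) * e1))) *
          ((γ₂⁻¹ * ((-2*(ρ₂:ℂ)) * e2) - γ₁ * ((-2*(ρ₁:ℂ)) * e1)) * solDen ρ₁ ρ₂ γ₁ γ₂ x t +
            solDen ρ₁ ρ₂ γ₁ γ₂ x t * (γ₂⁻¹ * ((-2*(ρ₂:ℂ)) * e2) - γ₁ * ((-2*(ρ₁:ℂ)) * e1)))) /
        (solDen ρ₁ ρ₂ γ₁ γ₂ x t ^ 2) ^ 2) x := by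
    rw [hF]
    exact hnum.div hden2' (pow_ne_zero 2 hd1)
  have h2nd := (Filter.EventuallyEq.deriv_eq hev).trans hFx.deriv
  -- conjugate term
  have hec : ∀ r : ℝ, (starRingEnd ℂ)
      (Complex.exp (-2 * (r : ℂ) * ((-x : ℝ) : ℂ) - 4 * Complex.I * (r : ℂ) ^ 2 * (t : ℂ))) =
      (Complex.exp (-2 * (r : ℂ) * (x : ℂ) - 4 * Complex.I * (r : ℂ) ^ 2 * (t : ℂ)))⁻¹ := by
    intro r
    rw [← Complex.exp_conj, ← Complex.exp_neg]
    congr 1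
    simp [Complex.conj_I, Complex.conj_ofReal, Complex.ofReal_neg, map_ofNat, map_mul, map_add, map_sub]
    ring
  have hDconj : (starRingEnd ℂ) (solDen ρ₁ ρ₂ γ₁ γ₂ (-x) t) = γ₂ * e2⁻¹ - γ₁⁻¹ * e1⁻¹ := by
    simp only [solDen, map_sub, map_mul, hg2i, hg1', hec, he1, he2]
  have hDcne : γ₂ * e2⁻¹ - γ₁⁻¹ * e1⁻¹ ≠ 0 := by
    rw [← hDconj]
    simpa using hd2
  have hcq : (starRingEnd ℂ) (solQ ρ₁ ρ₂ γ₁ γ₂ (-x) t) =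
      2 * ((ρ₁ : ℂ) - (ρ₂ : ℂ)) / (γ₂ * e2⁻¹ - γ₁⁻¹ * e1⁻¹) := by
    simp only [solQ, map_div₀, hDconj]
    congr 1
    simp [Complex.conj_ofReal, map_ofNat, map_mul, map_sub]
  have hd1' : γ₂⁻¹ * e2 - γ₁ * e1 ≠ 0 := by
    simpa only [solDen, ← he1, ← he2] using hd1
  have hd1'' : e2 - γ₂ * γ₁ * e1 ≠ 0 := by
    intro h
    apply hd1'
    have hh : γ₂⁻¹ * e2 - γ₁ * e1 = γ₂⁻¹ * (e2 - γ₂ * γ₁ * e1) := by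
      field_simp
    rw [hh, h, mul_zero]
  have hkey : 2 * ((ρ₁ : ℂ) - (ρ₂ : ℂ)) / (γ₂ * e2⁻¹ - γ₁⁻¹ * e1⁻¹) =
      -(2 * ((ρ₁ : ℂ) - (ρ₂ : ℂ))) * (γ₂⁻¹ * e2) * (γ₁ * e1) / (γ₂⁻¹ * e2 - γ₁ * e1) := by
    rw [div_eq_div_iff hDcne hd1']
    field_simp
    ring
  rw [hQt.deriv, h2nd, hcq, hkey]
  simp only [solQ, solDen, ← he1, ← he2] at hd1 ⊢
  have halg := alg (ρ₁ : ℂ) (ρ₂ : ℂ) (γ₂⁻¹ * e2) (γ₁ * e1) hd1'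
  linear_combination halg
end
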